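/- Let Λ be a nonempty finite set and let X ⊆ Λ^ℕ be a subshift. The following are equivalent: (i) the follower set F_α is open in X for every finite word α ∈ Λ*; (ii) the follower set F_a is open in X for every letter a ∈ Λ; (iii) the restriction of the shift map S to X is an open mapping from X to X; (iv) X is a subshift of finite type. -/

import Mathlib

set_option linter.unusedSectionVars false
set_option linter.unusedVariables false


open scoped Classical

namespace SubshiftPaper

variable {Λ : Type}

/-- The left shift on infinite words. -/
def shiftMap (x : ℕ → Λ) : ℕ → Λ := fun n => x (n + 1)

/-- Concatenation of a finite word with an infinite word. -/
def cat (α : List Λ) (y : ℕ → Λ) : ℕ → Λ := fun n => α.getD n (y (n - α.length))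

/-- `α` is a prefix of the infinite word `x`. -/
def Pref (α : List Λ) (x : ℕ → Λ) : Prop := ∀ (i : ℕ) (h : i < α.length), x i = α[i]

/-- The tail of `x` after `n` letters. -/
def tail (x : ℕ → Λ) (n : ℕ) : ℕ → Λ := fun i => x (n + i)

/-- `α` occurs in `x` at position `n`. -/
def OccursAt (α : List Λ) (x : ℕ → Λ) (n : ℕ) : Prop :=
  ∀ (i : ℕ) (h : i < α.length), x (n + i) = α[i]

/-- `α` occurs in `x` (as a contiguous block of letters). -/
def Occurs (α : List Λ) (x : ℕ → Λ) : Prop := ∃ n, OccursAt α x n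

/-- `X` is a subshift: a nonempty closed shift-invariant subset. -/
def IsSubshift [TopologicalSpace Λ] (X : Set (ℕ → Λ)) : Prop :=
  X.Nonempty ∧ IsClosed X ∧ ∀ x ∈ X, shiftMap x ∈ X

/-- The set of infinite words avoiding all words in `F`. -/
def ForbidSpace (F : Set (List Λ)) : Set (ℕ → Λ) := {x | ∀ α ∈ F, ¬ Occurs α x}

/-- `X` is a subshift of finite type. -/
def IsSFT (X : Set (ℕ → Λ)) : Prop := ∃ F : Set (List Λ), F.Finite ∧ X = ForbidSpace F

/-- The follower set of a finite word. -/
def follower (X : Set (ℕ → Λ)) (α : List Λ) : Set (ℕ → Λ) := {y | y ∈ X ∧ cat α y ∈ X}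

/-- The cylinder of a finite word. -/
def cylinder (X : Set (ℕ → Λ)) (α : List Λ) : Set (ℕ → Λ) := {x | x ∈ X ∧ Pref α x}

/-- The language of `X`. -/
def Language (X : Set (ℕ → Λ)) : Set (List Λ) := {α | ∃ x ∈ X, Occurs α x}

/-- The embedding of finite words into the free group. -/
def wd (α : List Λ) : FreeGroup Λ := (α.map FreeGroup.of).prod

/-- Indicator function of a set of group elements. -/
noncomputable def chi (s : Set (FreeGroup Λ)) : FreeGroup Λ → Bool :=
  fun g => if g ∈ s then true else false

/-- The set `ξ_x ⊆ 𝔽`. -/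
def xiSet [DecidableEq Λ] (X : Set (ℕ → Λ)) (x : ℕ → Λ) : Set (FreeGroup Λ) :=
  {g | ∃ α β : List Λ, g = wd α * (wd β)⁻¹ ∧
        FreeGroup.norm g = α.length + β.length ∧
        Pref α x ∧ tail x α.length ∈ follower X α ∩ follower X β}

/-- `ξ_x` as an element of `2^𝔽`. -/
noncomputable def xiB [DecidableEq Λ] (X : Set (ℕ → Λ)) (x : ℕ → Λ) : FreeGroup Λ → Bool :=
  chi (xiSet X x)

/-- The spectrum `Ω_X`: the closure of `{ξ_x : x ∈ X}` in `2^𝔽`. -/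
noncomputable def Omega [DecidableEq Λ] (X : Set (ℕ → Λ)) : Set (FreeGroup Λ → Bool) :=
  closure ((fun x => xiB X x) '' X)

/-- Left translation of an element of `2^𝔽`. -/
def translate (g : FreeGroup Λ) (ξ : FreeGroup Λ → Bool) : FreeGroup Λ → Bool :=
  fun h => ξ (g⁻¹ * h)

/-- `x` is the stem of `ξ`: `ξ ∩ 𝔽₊` is exactly the set of prefixes of `x`. -/
def IsStem (ξ : FreeGroup Λ → Bool) (x : ℕ → Λ) : Prop :=
  {g | ξ g = true} ∩ {g | ∃ α : List Λ, g = wd α} =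
    {g | ∃ α : List Λ, g = wd α ∧ Pref α x}

/-- `x` is the stem of `ξ` at `g`: `ξ ∩ g𝔽₊ = {gα : α is a prefix of x}`. -/
def IsStemAt (ξ : FreeGroup Λ → Bool) (g : FreeGroup Λ) (x : ℕ → Λ) : Prop :=
  {h | ξ h = true} ∩ {h | ∃ α : List Λ, h = g * wd α} =
    {h | ∃ α : List Λ, h = g * wd α ∧ Pref α x}

/-- The orbit of `ξ` under the spectral partial action. -/
def Orbit (ξ : FreeGroup Λ → Bool) : Set (FreeGroup Λ → Bool) :=
  {η | ∃ g : FreeGroup Λ, ξ g⁻¹ = true ∧ η = translate g ξ}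

/-- Topological freeness of the spectral partial action. -/
noncomputable def TopFree [DecidableEq Λ] (X : Set (ℕ → Λ)) : Prop :=
  ∀ g : FreeGroup Λ, g ≠ 1 →
    ∀ U : Set (FreeGroup Λ → Bool), IsOpen U →
      (U ∩ Omega X ⊆ {ξ | ξ g⁻¹ = true ∧ translate g ξ = ξ}) → U ∩ Omega X = ∅

/-- The periodic infinite word `γ^∞`. -/
noncomputable def perInf [Nonempty Λ] (γ : List Λ) : ℕ → Λ :=
  fun n => γ.getD (n % γ.length) (Classical.arbitrary Λ)

/-- `n`-fold concatenation of a finite word with itself. -/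
def rep : ℕ → List Λ → List Λ
  | 0, _ => []
  | n + 1, γ => γ ++ rep n γ

/-- `γ` is a circuit relative to `X`. -/
noncomputable def IsCircuit [Nonempty Λ] (X : Set (ℕ → Λ)) (γ : List Λ) : Prop :=
  γ ≠ [] ∧ perInf γ ∈ X

/-- `y` is an exit for the circuit `γ`. -/
noncomputable def IsExit [Nonempty Λ] (X : Set (ℕ → Λ)) (γ : List Λ) (y : ℕ → Λ) : Prop :=
  y ≠ perInf γ ∧ cat γ y ∈ X

/-- `z` is a strong exit for the circuit `γ`. -/
noncomputable def IsStrongExit [Nonempty Λ] (X : Set (ℕ → Λ)) (γ : List Λ) (z : ℕ → Λ) : Prop :=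
  z ≠ perInf γ ∧ ∀ n : ℕ, cat (rep n γ) z ∈ X

/-- The sets `X_g` of the standard partial action. -/
def Xg [DecidableEq Λ] (X : Set (ℕ → Λ)) (g : FreeGroup Λ) : Set (ℕ → Λ) :=
  {x | ∃ α β : List Λ, g = wd α * (wd β)⁻¹ ∧
        FreeGroup.norm g = α.length + β.length ∧
        ∃ y ∈ follower X α ∩ follower X β, x = cat α y}

/-- `x` is a fixed point for `θ_g`. -/
def IsThetaFixed [DecidableEq Λ] (X : Set (ℕ → Λ)) (g : FreeGroup Λ) (x : ℕ → Λ) : Prop :=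
  ∃ α β : List Λ, g = wd α * (wd β)⁻¹ ∧
    FreeGroup.norm g = α.length + β.length ∧
    ∃ y ∈ follower X α ∩ follower X β, x = cat β y ∧ cat α y = x

/-- `x` may be collectively reached from the finite set `B`. -/
def CollReached (X : Set (ℕ → Λ)) (B : Finset (List Λ)) (x : ℕ → Λ) : Prop :=
  ∃ α γ : List Λ, Pref α x ∧ ∀ β ∈ B, cat (β ++ γ) (tail x α.length) ∈ X

/-- `X` is collectively cofinal. -/
def CollCofinal (X : Set (ℕ → Λ)) : Prop :=
  ∀ B : Finset (List Λ), ↑B ⊆ Language X → (⋂ β ∈ B, follower X β).Nonempty →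
    ∀ x ∈ X, CollReached X B x

/-- `X` is strongly cofinal. -/
def StrongCofinal (X : Set (ℕ → Λ)) : Prop :=
  ∀ β ∈ Language X, ∃ M : ℕ, ∀ x ∈ X, ∃ α γ : List Λ, Pref α x ∧
    cat (β ++ γ) (tail x α.length) ∈ X ∧ α.length + γ.length ≤ M

/-- The even shift. -/
def evenShift : Set (ℕ → Fin 2) :=
  ForbidSpace {w | ∃ n : ℕ, w = 0 :: (List.replicate (2 * n + 1) 1 ++ [0])}



section Aux
variable [TopologicalSpace Λ] [DiscreteTopology Λ]

lemma cat_lt (α : List Λ) (y : ℕ → Λ) {n : ℕ} (h : n < α.length) : cat α y n = α[n] :=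
  List.getD_eq_getElem α _ h

lemma cat_ge (α : List Λ) (y : ℕ → Λ) {n : ℕ} (h : α.length ≤ n) :
    cat α y n = y (n - α.length) :=
  List.getD_eq_default α _ h

lemma cat_single_zero (a : Λ) (y : ℕ → Λ) : cat [a] y 0 = a := rfl

lemma cat_single_succ (a : Λ) (y : ℕ → Λ) (n : ℕ) : cat [a] y (n + 1) = y n := by
  have : cat [a] y (n+1) = y (n + 1 - 1) := cat_ge [a] y (by simp)
  simpa using this



lemma continuous_cat (α : List Λ) : Continuous (cat α : (ℕ → Λ) → (ℕ → Λ)) := by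
  refine continuous_pi fun n => ?_
  by_cases h : n < α.length
  · have : (fun y : ℕ → Λ => cat α y n) = fun _ => α[n] := funext fun y => cat_lt α y h
    rw [this]; exact continuous_const
  · have : (fun y : ℕ → Λ => cat α y n) = fun y => y (n - α.length) :=
      funext fun y => cat_ge α y (le_of_not_gt h)
    rw [this]; exact continuous_apply _

lemma isOpen_agree (y : ℕ → Λ) (n : ℕ) : IsOpen {z : ℕ → Λ | ∀ i < n, z i = y i} := by
  have : {z : ℕ → Λ | ∀ i < n, z i = y i} = ⋂ i ∈ Finset.range n, {z : ℕ → Λ | z i = y i} := by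
    ext z; simp [Finset.mem_range]
  rw [this]
  refine isOpen_biInter_finset fun i _ => ?_
  have : {z : ℕ → Λ | z i = y i} = (fun z : ℕ → Λ => z i) ⁻¹' {y i} := rfl
  rw [this]
  exact (continuous_apply i).isOpen_preimage _ (isOpen_discrete _)

lemma exists_agree_subset {U : Set (ℕ → Λ)} (hU : IsOpen U) {x : ℕ → Λ} (hx : x ∈ U) :
    ∃ n : ℕ, ∀ z : ℕ → Λ, (∀ i < n, z i = x i) → z ∈ U := by
  obtain ⟨I, u, hIu, hsub⟩ := isOpen_pi_iff.mp hU x hx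
  refine ⟨I.sup id + 1, fun z hz => hsub ?_⟩
  intro i hi
  have : z i = x i := hz i (Nat.lt_succ_of_le (Finset.le_sup (f := id) hi))
  rw [this]; exact (hIu i hi).2

lemma tail_mem {X : Set (ℕ → Λ)} (hX : IsSubshift X) {x : ℕ → Λ} (hx : x ∈ X) (n : ℕ) :
    tail x n ∈ X := by
  induction n with
  | zero =>
    have : tail x 0 = x := by funext i; simp [tail]
    rw [this]; exact hx
  | succ n ih =>
    have : tail x (n + 1) = shiftMap (tail x n) := by
      funext i; simp [tail, shiftMap]; ring_nf
    rw [this]; exact hX.2.2 _ ih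

lemma mem_language_iff {X : Set (ℕ → Λ)} (hX : IsSubshift X) (α : List Λ) :
    α ∈ Language X ↔ ∃ z ∈ X, Pref α z := by
  constructor
  · rintro ⟨x, hx, n, hn⟩
    exact ⟨tail x n, tail_mem hX hx n, fun i hi => hn i hi⟩
  · rintro ⟨z, hz, hp⟩
    exact ⟨z, hz, 0, fun i hi => by simpa using hp i hi⟩



lemma isClosed_follower {X : Set (ℕ → Λ)} (hX : IsSubshift X) (α : List Λ) :
    IsClosed (follower X α) := by
  have : follower X α = X ∩ (cat α) ⁻¹' X := rfl
  rw [this]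
  exact hX.2.1.inter (hX.2.1.preimage (continuous_cat α))

lemma uniform_single [Fintype Λ] {X : Set (ℕ → Λ)} (hX : IsSubshift X) (a : Λ)
    (h : ∃ U : Set (ℕ → Λ), IsOpen U ∧ follower X [a] = U ∩ X) :
    ∃ N : ℕ, ∀ y z : ℕ → Λ, y ∈ follower X [a] → z ∈ X →
      (∀ i < N, z i = y i) → z ∈ follower X [a] := by
  obtain ⟨U, hUo, hUe⟩ := h
  have hFc : IsClosed (follower X [a]) := isClosed_follower hX [a]
  have hcomp : IsCompact X := hX.2.1.isCompact
  have hpt : ∀ y : ℕ → Λ, ∃ n : ℕ,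
      (y ∈ follower X [a] → ∀ z, (∀ i < n, z i = y i) → z ∈ U) ∧
      (y ∉ follower X [a] → ∀ z, (∀ i < n, z i = y i) → z ∉ follower X [a]) := by
    intro y
    by_cases hy : y ∈ follower X [a]
    · have hyU : y ∈ U := by rw [hUe] at hy; exact hy.1
      obtain ⟨n, hn⟩ := exists_agree_subset hUo hyU
      exact ⟨n, fun _ => hn, fun c => absurd hy c⟩
    · obtain ⟨n, hn⟩ := exists_agree_subset hFc.isOpen_compl hy
      exact ⟨n, fun c => absurd c hy, fun _ z hz => hn z hz⟩
  choose n hn1 hn2 using hpt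
  obtain ⟨t, ht⟩ := hcomp.elim_finite_subcover
    (fun y : ℕ → Λ => {z : ℕ → Λ | ∀ i < n y, z i = y i})
    (fun y => isOpen_agree y (n y))
    (fun y _ => Set.mem_iUnion.mpr ⟨y, fun i _ => rfl⟩)
  refine ⟨t.sup n, fun y z hy hz hagree => ?_⟩
  obtain ⟨w, hwt, hyw⟩ := Set.mem_iUnion₂.mp (ht hy.1)
  have hnw : n w ≤ t.sup n := Finset.le_sup hwt
  have hzw : ∀ i < n w, z i = w i := fun i hi =>
    (hagree i (lt_of_lt_of_le hi hnw)).trans (hyw i hi)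
  by_cases hwF : w ∈ follower X [a]
  · have : z ∈ U := hn1 w hwF z hzw
    rw [hUe]; exact ⟨this, hz⟩
  · exact absurd hy (hn2 w hwF y hyw)

lemma uniform_all [Fintype Λ] {X : Set (ℕ → Λ)} (hX : IsSubshift X)
    (h : ∀ a : Λ, ∃ U : Set (ℕ → Λ), IsOpen U ∧ follower X [a] = U ∩ X) :
    ∃ N : ℕ, ∀ (a : Λ) (y z : ℕ → Λ), y ∈ follower X [a] → z ∈ X →
      (∀ i < N, z i = y i) → z ∈ follower X [a] := by
  choose N hN using fun a => uniform_single hX a (h a)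
  refine ⟨Finset.univ.sup N, fun a y z hy hz hagree => ?_⟩
  exact hN a y z hy hz fun i hi =>
    hagree i (lt_of_lt_of_le hi (Finset.le_sup (Finset.mem_univ a)))

lemma extend {X : Set (ℕ → Λ)} (hX : IsSubshift X) {N : ℕ}
    (hN : ∀ (a : Λ) (y z : ℕ → Λ), y ∈ follower X [a] → z ∈ X →
      (∀ i < N, z i = y i) → z ∈ follower X [a])
    (x : ℕ → Λ)
    (hwin : ∀ n : ℕ, ∃ z ∈ X, ∀ i < N + 1, z i = x (n + i)) :
    ∀ m, ∃ v ∈ X, ∀ i < m, v i = x i := by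
  suffices h : ∀ m, ∃ v ∈ X, ∀ i < N + 1 + m, v i = x i by
    intro m
    obtain ⟨v, hv, hvi⟩ := h m
    exact ⟨v, hv, fun i hi => hvi i (by omega)⟩
  intro m
  induction m with
  | zero =>
    obtain ⟨z, hz, hzi⟩ := hwin 0
    exact ⟨z, hz, fun i hi => by simpa using hzi i (by omega)⟩
  | succ m ih =>
    obtain ⟨v, hv, hvi⟩ := ih
    have inner : ∀ j, j ≤ m + 1 → ∃ u ∈ X, ∀ i < N + 1 + j, u i = x (m + 1 - j + i) := by
      intro j
      induction j with
      | zero =>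
        intro _
        obtain ⟨z, hz, hzi⟩ := hwin (m + 1)
        refine ⟨z, hz, fun i hi => ?_⟩
        have he : m + 1 - 0 + i = m + 1 + i := by omega
        rw [he]; exact hzi i (by omega)
      | succ j ihj =>
        intro hj
        obtain ⟨u, hu, hui⟩ := ihj (by omega)
        set p := m + 1 - j with hp
        have hp1 : 1 ≤ p := by omega
        set a := x (p - 1) with ha
        have hyF : tail v p ∈ follower X [a] := by
          refine ⟨tail_mem hX hv p, ?_⟩
          have hcat : cat [a] (tail v p) = tail v (p - 1) := by
            funext i
            cases i with
            | zero =>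
              have : v (p - 1 + 0) = x (p - 1) := hvi (p - 1) (by omega)
              simpa [tail, cat_single_zero] using this.symm
            | succ i =>
              have h1 : cat [a] (tail v p) (i + 1) = v (p + i) := cat_single_succ a _ i
              have h2 : tail v (p - 1) (i + 1) = v (p + i) := by
                simp only [tail]; congr 1; omega
              rw [h1, h2]
          rw [hcat]
          exact tail_mem hX hv (p - 1)
        have hagree : ∀ i < N, u i = tail v p i := by
          intro i hi
          have h1 : u i = x (p + i) := hui i (by omega)
          have h2 : tail v p i = x (p + i) := hvi (p + i) (by omega)
          rw [h1, h2]
        have huF : u ∈ follower X [a] := hN a (tail v p) u hyF hu hagree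
        refine ⟨cat [a] u, huF.2, ?_⟩
        intro i hi
        cases i with
        | zero =>
          have : m + 1 - (j + 1) + 0 = p - 1 := by omega
          rw [this, cat_single_zero]
        | succ i =>
          rw [cat_single_succ]
          have h1 : u i = x (p + i) := hui i (by omega)
          have h2 : m + 1 - (j + 1) + (i + 1) = p + i := by omega
          rw [h2, h1]
    obtain ⟨u, hu, hui⟩ := inner (m + 1) le_rfl
    exact ⟨u, hu, fun i hi => by simpa using hui i (by omega)⟩



lemma two_to_four [Fintype Λ] {X : Set (ℕ → Λ)} (hX : IsSubshift X)
    (h2 : ∀ a : Λ, ∃ U : Set (ℕ → Λ), IsOpen U ∧ follower X [a] = U ∩ X) : IsSFT X := by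
  obtain ⟨N, hN⟩ := uniform_all hX h2
  refine ⟨{w : List Λ | w.length = N + 1 ∧ w ∉ Language X},
    ((List.finite_length_eq Λ (N + 1)).subset fun w hw => hw.1), ?_⟩
  apply Set.Subset.antisymm
  · intro x hx w hw hocc
    exact hw.2 ⟨x, hx, hocc⟩
  · intro x hx
    have hwin : ∀ n : ℕ, ∃ z ∈ X, ∀ i < N + 1, z i = x (n + i) := by
      intro n
      set w : List Λ := List.ofFn (fun i : Fin (N + 1) => x (n + i)) with hw
      have hwlen : w.length = N + 1 := List.length_ofFn
      have hwL : w ∈ Language X := by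
        by_contra hc
        refine hx w ⟨hwlen, hc⟩ ⟨n, fun i hi => ?_⟩
        rw [List.getElem_ofFn]
      obtain ⟨z, hz, hp⟩ := (mem_language_iff hX w).mp hwL
      refine ⟨z, hz, fun i hi => ?_⟩
      have := hp i (by omega)
      rwa [List.getElem_ofFn] at this
    have hext := extend hX hN x hwin
    have : x ∈ closure X := by
      rw [mem_closure_iff]
      intro o ho hxo
      obtain ⟨n, hn⟩ := exists_agree_subset ho hxo
      obtain ⟨v, hv, hvi⟩ := hext n
      exact ⟨v, hn v hvi, hv⟩
    rwa [hX.2.1.closure_eq] at this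

lemma four_to_one {X : Set (ℕ → Λ)} (hX : IsSubshift X) (h4 : IsSFT X) :
    ∀ α : List Λ, ∃ U : Set (ℕ → Λ), IsOpen U ∧ follower X α = U ∩ X := by
  obtain ⟨F, hFfin, hFX⟩ := h4
  intro α
  have hocc : ∀ (w : List Λ) (n : ℕ), IsClosed {x : ℕ → Λ | OccursAt w x n} := by
    intro w n
    have : {x : ℕ → Λ | OccursAt w x n} =
        ⋂ i : Fin w.length, {x : ℕ → Λ | x (n + i) = w[(i : ℕ)]} := by
      ext x
      simp only [Set.mem_setOf_eq, Set.mem_iInter]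
      exact ⟨fun h i => h i i.2, fun h i hi => h ⟨i, hi⟩⟩
    rw [this]
    refine isClosed_iInter fun i => ?_
    have : {x : ℕ → Λ | x (n + i) = w[(i : ℕ)]} =
        (fun x : ℕ → Λ => x (n + i)) ⁻¹' {w[(i : ℕ)]} := rfl
    rw [this]
    exact IsClosed.preimage (continuous_apply _) (isClosed_discrete _)
  refine ⟨⋂ w ∈ F, ⋂ n ∈ Finset.range α.length,
      ((cat α : (ℕ → Λ) → (ℕ → Λ)) ⁻¹' {x | OccursAt w x n})ᶜ, ?_, ?_⟩
  · exact Set.Finite.isOpen_biInter hFfin fun w _ =>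
      isOpen_biInter_finset fun n _ =>
        (((hocc w n).preimage (continuous_cat α)).isOpen_compl)
  · ext y
    simp only [follower, Set.mem_setOf_eq, Set.mem_inter_iff, Set.mem_iInter,
      Set.mem_compl_iff, Set.mem_preimage, Finset.mem_range]
    constructor
    · rintro ⟨hyX, hcX⟩
      refine ⟨fun w hw n _ ho => ?_, hyX⟩
      have := hFX ▸ hcX
      exact this w hw ⟨n, ho⟩
    · rintro ⟨hU, hyX⟩
      refine ⟨hyX, ?_⟩
      rw [hFX]
      rintro w hw ⟨n, ho⟩
      by_cases hn : n < α.length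
      · exact hU w hw n hn ho
      · have hyF : y ∈ ForbidSpace F := hFX ▸ hyX
        refine hyF w hw ⟨n - α.length, fun i hi => ?_⟩
        have h1 := ho i hi
        rw [cat_ge α y (by omega)] at h1
        have : n - α.length + i = n + i - α.length := by omega
        rw [this]; exact h1

lemma two_to_three {X : Set (ℕ → Λ)} (hX : IsSubshift X)
    (h2 : ∀ a : Λ, ∃ U : Set (ℕ → Λ), IsOpen U ∧ follower X [a] = U ∩ X) :
    ∀ U : Set (ℕ → Λ), IsOpen U →
      ∃ V : Set (ℕ → Λ), IsOpen V ∧ shiftMap '' (U ∩ X) = V ∩ X := by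
  choose Ua hUao hUae using h2
  intro U hU
  have hpt : ∀ x : ℕ → Λ, ∃ n, x ∈ U → ∀ z : ℕ → Λ, (∀ i < n, z i = x i) → z ∈ U := by
    intro x
    by_cases hx : x ∈ U
    · obtain ⟨n, hn⟩ := exists_agree_subset hU hx
      exact ⟨n, fun _ => hn⟩
    · exact ⟨0, fun c => absurd c hx⟩
  choose n hn using hpt
  refine ⟨⋃ x ∈ U ∩ X, ({z : ℕ → Λ | ∀ i < n x - 1, z i = shiftMap x i} ∩ Ua (x 0)), ?_, ?_⟩
  · exact isOpen_iUnion fun x => isOpen_iUnion fun _ =>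
      (isOpen_agree (shiftMap x) (n x - 1)).inter (hUao (x 0))
  · ext z
    constructor
    · rintro ⟨x, hxUX, rfl⟩
      have hsX : shiftMap x ∈ X := hX.2.2 x hxUX.2
      refine ⟨Set.mem_iUnion₂.mpr ⟨x, hxUX, fun i _ => rfl, ?_⟩, hsX⟩
      have hcat : cat [x 0] (shiftMap x) = x := by
        funext i
        cases i with
        | zero => exact cat_single_zero _ _
        | succ i => exact cat_single_succ _ _ i
      have : shiftMap x ∈ follower X [x 0] := ⟨hsX, by rw [hcat]; exact hxUX.2⟩
      rw [hUae (x 0)] at this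
      exact this.1
    · rintro ⟨hzV, hzX⟩
      obtain ⟨x, hxUX, hagree, hzUa⟩ := Set.mem_iUnion₂.mp hzV
      have hzF : z ∈ follower X [x 0] := by
        rw [hUae (x 0)]; exact ⟨hzUa, hzX⟩
      refine ⟨cat [x 0] z, ⟨?_, hzF.2⟩, ?_⟩
      · refine hn x hxUX.1 _ fun i hi => ?_
        cases i with
        | zero => exact cat_single_zero _ _
        | succ i =>
          rw [cat_single_succ]
          exact hagree i (by omega)
      · funext i
        exact cat_single_succ _ _ i

lemma three_to_two {X : Set (ℕ → Λ)} (hX : IsSubshift X)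
    (h3 : ∀ U : Set (ℕ → Λ), IsOpen U →
      ∃ V : Set (ℕ → Λ), IsOpen V ∧ shiftMap '' (U ∩ X) = V ∩ X) :
    ∀ a : Λ, ∃ U : Set (ℕ → Λ), IsOpen U ∧ follower X [a] = U ∩ X := by
  intro a
  have hUo : IsOpen {x : ℕ → Λ | x 0 = a} := by
    have : {x : ℕ → Λ | x 0 = a} = (fun x : ℕ → Λ => x 0) ⁻¹' {a} := rfl
    rw [this]
    exact (continuous_apply 0).isOpen_preimage _ (isOpen_discrete _)
  obtain ⟨V, hVo, hVe⟩ := h3 _ hUo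
  refine ⟨V, hVo, ?_⟩
  rw [← hVe]
  ext y
  constructor
  · rintro ⟨hyX, hcy⟩
    refine ⟨cat [a] y, ⟨cat_single_zero a y, hcy⟩, funext fun i => cat_single_succ a y i⟩
  · rintro ⟨x, ⟨hx0, hxX⟩, rfl⟩
    refine ⟨hX.2.2 x hxX, ?_⟩
    have : cat [a] (shiftMap x) = x := by
      funext i
      cases i with
      | zero => exact hx0.symm ▸ cat_single_zero _ _
      | succ i => exact cat_single_succ _ _ i
    rw [this]
    exact hxX


end Aux

/-- For a subshift `X` over a finite alphabet, the following are equivalent: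
(i) every follower set `F_α` is open in `X`; (ii) `F_a` is open in `X` for each letter `a`;
(iii) the shift is an open map on `X`; (iv) `X` is a subshift of finite type. -/
theorem follower_open_tfae {Λ : Type} [Fintype Λ] [Nonempty Λ]
    [TopologicalSpace Λ] [DiscreteTopology Λ]
    (X : Set (ℕ → Λ)) (hX : IsSubshift X) :
    List.TFAE
      [∀ α : List Λ, ∃ U : Set (ℕ → Λ), IsOpen U ∧ follower X α = U ∩ X,
       ∀ a : Λ, ∃ U : Set (ℕ → Λ), IsOpen U ∧ follower X [a] = U ∩ X,
       ∀ U : Set (ℕ → Λ), IsOpen U →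
         ∃ V : Set (ℕ → Λ), IsOpen V ∧ shiftMap '' (U ∩ X) = V ∩ X,
       IsSFT X] := by
  tfae_have 1 → 2 := fun h a => h [a]
  tfae_have 2 → 4 := fun h => two_to_four hX h
  tfae_have 4 → 1 := fun h => four_to_one hX h
  tfae_have 2 → 3 := fun h => two_to_three hX h
  tfae_have 3 → 2 := fun h => three_to_two hX h
  tfae_finish


end SubshiftPaper
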